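/- arXiv:2204.10712 — 4 statements merged into one kernel-verified Lean document; each statement's English description precedes it below -/
import Mathlib

section
/- Let f : B^n → B^n be a Boolean network whose interaction graph is a directed acyclic graph (i.e., the relation 'j influences i', meaning f_i depends on coordinate j, has no directed cycle). Then f has a unique fixed point x*, and every trajectory under parallel iteration reaches x*: for every x ∈ B^n, f^n(x) = x*. -/
open scoped Classical


/-- `influ f j i` : node `j` influences node `i`, i.e. `f_i` depends on `x_j`. -/
def influ {n : ℕ} (f : (Fin n → Bool) → Fin n → Bool) (j i : Fin n) : Prop :=
  ∃ x : Fin n → Bool,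
    f (Function.update x j true) i ≠ f (Function.update x j false) i

open Classical in
lemma not_influ_update {n : ℕ} {f : (Fin n → Bool) → Fin n → Bool} {a i : Fin n}
    (h : ¬ influ f a i) (z : Fin n → Bool) (b : Bool) :
    f (Function.update z a b) i = f z i := by
  unfold influ at h
  push_neg at h
  have hz := h z
  have hself : f z i = f (Function.update z a (z a)) i := by
    rw [Function.update_eq_self]
  rw [hself]
  cases b <;> cases hb : z a <;> simp [hb, hz]

open Classical in
lemma depends_only {n : ℕ} {f : (Fin n → Bool) → Fin n → Bool} (i : Fin n) :
    ∀ s : Finset (Fin n), ∀ x y : Fin n → Bool,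
      (∀ j, x j ≠ y j → j ∈ s) → (∀ j, influ f j i → x j = y j) →
      f x i = f y i := by
  intro s
  induction s using Finset.induction_on with
  | empty =>
    intro x y hs _
    have : x = y := funext fun j => by
      by_contra h
      exact absurd (hs j h) (Finset.notMem_empty j)
    rw [this]
  | @insert a s ha ih =>
    intro x y hs hinf
    set x' := Function.update x a (y a) with hx'
    have step1 : f x i = f x' i := by
      by_cases hai : influ f a i
      · have hxa : x a = y a := hinf a hai
        rw [hx', ← hxa, Function.update_eq_self]
      · exact (not_influ_update hai x (y a)).symm
    rw [step1]
    apply ih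
    · intro j hj
      have hja : j ≠ a := by
        intro he
        apply hj
        rw [he, hx', Function.update_self]
      have hx'j : x' j = x j := Function.update_of_ne hja _ _
      have := hs j (by rw [← hx'j]; exact hj)
      rcases Finset.mem_insert.mp this with h1 | h1
      · exact absurd h1 hja
      · exact h1
    · intro j hji
      by_cases hja : j = a
      · rw [hja, hx', Function.update_self]
      · rw [hx', Function.update_of_ne hja]
        exact hinf j hji

/-- rank of a node: number of ancestors in the interaction graph. -/
noncomputable def rank {n : ℕ} (f : (Fin n → Bool) → Fin n → Bool) (i : Fin n) : ℕ :=
  (Finset.univ.filter (fun j => Relation.TransGen (influ f) j i)).card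

open Classical in
lemma rank_lt {n : ℕ} {f : (Fin n → Bool) → Fin n → Bool}
    (hacyc : ∀ i : Fin n, ¬ Relation.TransGen (fun j i => influ f j i) i i)
    {j i : Fin n} (hji : influ f j i) : rank f j < rank f i := by
  unfold rank
  apply Finset.card_lt_card
  constructor
  · intro k hk
    simp only [Finset.mem_filter, Finset.mem_univ, true_and] at hk ⊢
    exact hk.tail hji
  · intro hsub
    have hji' : j ∈ Finset.univ.filter (fun k => Relation.TransGen (influ f) k i) := by
      simp only [Finset.mem_filter, Finset.mem_univ, true_and]
      exact Relation.TransGen.single hji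
    have := hsub hji'
    simp only [Finset.mem_filter, Finset.mem_univ, true_and] at this
    exact hacyc j this

open Classical in
lemma rank_lt_n {n : ℕ} {f : (Fin n → Bool) → Fin n → Bool}
    (hacyc : ∀ i : Fin n, ¬ Relation.TransGen (fun j i => influ f j i) i i)
    (i : Fin n) : rank f i < n := by
  have hsub : Finset.univ.filter (fun j => Relation.TransGen (influ f) j i) ⊆
      Finset.univ.erase i := by
    intro k hk
    simp only [Finset.mem_filter, Finset.mem_univ, true_and] at hk
    apply Finset.mem_erase.mpr
    refine ⟨?_, Finset.mem_univ k⟩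
    intro he
    exact hacyc i (he ▸ hk)
  have h1 : rank f i ≤ (Finset.univ.erase i).card := Finset.card_le_card hsub
  rw [Finset.card_erase_of_mem (Finset.mem_univ i)] at h1
  have h2 : (Finset.univ : Finset (Fin n)).card = n := by simp
  rw [h2] at h1
  have hn : 0 < n := i.pos
  omega

open Classical in
lemma iter_agree {n : ℕ} {f : (Fin n → Bool) → Fin n → Bool}
    (hacyc : ∀ i : Fin n, ¬ Relation.TransGen (fun j i => influ f j i) i i) :
    ∀ k : ℕ, ∀ i : Fin n, rank f i < k → ∀ x y : Fin n → Bool,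
      f^[k] x i = f^[k] y i := by
  intro k
  induction k with
  | zero => intro i hi; omega
  | succ k ih =>
    intro i hi x y
    rw [Function.iterate_succ_apply', Function.iterate_succ_apply']
    apply depends_only i Finset.univ _ _ (fun j _ => Finset.mem_univ j)
    intro j hji
    have hj : rank f j < k := by
      have := rank_lt hacyc hji
      omega
    exact ih j hj x y

/-- If the interaction graph of `f` has no directed cycle (its transitive
closure is irreflexive), then `f` has a unique fixed point `x*`, reached from
every configuration after `n` parallel steps. -/
theorem stmt_5 {n : ℕ} (f : (Fin n → Bool) → Fin n → Bool)
    (hacyc : ∀ i : Fin n, ¬ Relation.TransGen (fun j i => influ f j i) i i) :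
    ∃ xs : Fin n → Bool, f xs = xs ∧ (∀ y, f y = y → y = xs) ∧
      ∀ x : Fin n → Bool, f^[n] x = xs := by
  set xs := f^[n] (fun _ => false) with hxs
  have hall : ∀ x : Fin n → Bool, f^[n] x = xs := by
    intro x
    funext i
    exact iter_agree hacyc n i (rank_lt_n hacyc i) x _
  have hfix : f xs = xs := by
    have h1 : f xs = f^[n] (f (fun _ => false)) := by
      rw [hxs]
      exact (Function.iterate_succ_apply' f n _).symm.trans (Function.iterate_succ_apply f n _)
    rw [h1, hall]
  refine ⟨xs, hfix, ?_, hall⟩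
  intro y hy
  have : f^[n] y = y := by
    apply Function.iterate_fixed hy
  rw [← this, hall]
end

section
/- Let f : B^n → B^n be a Boolean network whose interaction graph contains no positive cycle (a directed cycle with an even number of negative arcs, where the sign of arc (j,i) is determined by whether f_i is monotone increasing or decreasing in x_j). If f has two distinct fixed points, then the interaction graph contains a positive cycle; equivalently, if the signed interaction graph has no positive cycle, then f has at most one fixed point. -/
/-- `f_i` is nondecreasing in coordinate `j`. -/
def monoInc {n : ℕ} (f : (Fin n → Bool) → Fin n → Bool) (j i : Fin n) : Prop :=
  ∀ x : Fin n → Bool,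
    f (Function.update x j false) i ≤ f (Function.update x j true) i

/-- `f_i` is nonincreasing in coordinate `j`. -/
def monoDec {n : ℕ} (f : (Fin n → Bool) → Fin n → Bool) (j i : Fin n) : Prop :=
  ∀ x : Fin n → Bool,
    f (Function.update x j true) i ≤ f (Function.update x j false) i

lemma bool_aux : ∀ b c : Bool, b ≤ c → b ≠ c → b = false ∧ c = true := by decide

lemma key_step {n : ℕ} (f : (Fin n → Bool) → Fin n → Bool)
    (σ : Fin n → Fin n → Bool)
    (hsign : ∀ j i : Fin n, influ f j i →
      (σ j i = true → monoInc f j i) ∧ (σ j i = false → monoDec f j i))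
    (i : Fin n) :
    ∀ (N : ℕ) (u v : Fin n → Bool),
      (Finset.univ.filter (fun j => u j ≠ v j)).card ≤ N →
      f u i ≠ f v i →
      ∃ j, u j ≠ v j ∧ influ f j i ∧ (σ j i = false ↔ v j ≠ f v i) := by
  intro N
  induction N with
  | zero =>
    intro u v hcard hne
    exfalso
    apply hne
    have huv : u = v := by
      funext j
      by_contra hj
      have hmem : j ∈ Finset.univ.filter (fun j => u j ≠ v j) := by simp [hj]
      have := Finset.card_pos.mpr ⟨j, hmem⟩
      omega
    rw [huv]
  | succ N ih =>
    intro u v hcard hne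
    by_cases hall : u = v
    · exact absurd (by rw [hall]) hne
    obtain ⟨j0, hj0⟩ := Function.ne_iff.mp hall
    by_cases hfv : f (Function.update v j0 (u j0)) i = f v i
    · -- recurse on v' := update v j0 (u j0)
      set v' : Fin n → Bool := Function.update v j0 (u j0) with hv'
      have hsub : (Finset.univ.filter (fun j => u j ≠ v' j)) ⊆
          (Finset.univ.filter (fun j => u j ≠ v j)).erase j0 := by
        intro j hj
        simp only [Finset.mem_filter, Finset.mem_univ, true_and] at hj
        by_cases hjj : j = j0
        · subst hjj; simp [hv'] at hj
        · simp only [Finset.mem_erase, Finset.mem_filter, Finset.mem_univ, true_and]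
          exact ⟨hjj, by rwa [hv', Function.update_of_ne hjj] at hj⟩
      have hmem : j0 ∈ Finset.univ.filter (fun j => u j ≠ v j) := by simp [hj0]
      have hcard' : (Finset.univ.filter (fun j => u j ≠ v' j)).card ≤ N := by
        have h1 := Finset.card_le_card hsub
        have h3 := Finset.card_erase_of_mem hmem
        have h4 := Finset.card_pos.mpr ⟨j0, hmem⟩
        omega
      have hne' : f u i ≠ f v' i := by rw [hv', hfv]; exact hne
      obtain ⟨j, hju, hinf, hsig⟩ := ih u v' hcard' hne'
      have hjj0 : j ≠ j0 := by
        intro h; subst h; exact hju (by simp [hv'])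
      refine ⟨j, ?_, hinf, ?_⟩
      · rwa [hv', Function.update_of_ne hjj0] at hju
      · rwa [hv', Function.update_of_ne hjj0, hfv] at hsig
    · -- j0 is the witness
      -- identify the two updates of v at j0
      have hids : (Function.update v j0 true = v ∧
                    Function.update v j0 false = Function.update v j0 (u j0) ∧ v j0 = true) ∨
                  (Function.update v j0 false = v ∧
                    Function.update v j0 true = Function.update v j0 (u j0) ∧ v j0 = false) := by
        cases hb : v j0 with
        | true =>
          left
          have hu : u j0 = false := by
            cases hu : u j0
            · rfl
            · exact absurd (hu.trans hb.symm) hj0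
          refine ⟨?_, by rw [hu], rfl⟩
          rw [← hb]; exact Function.update_eq_self j0 v
        | false =>
          right
          have hu : u j0 = true := by
            cases hu : u j0
            · exact absurd (hu.trans hb.symm) hj0
            · rfl
          refine ⟨?_, by rw [hu], rfl⟩
          rw [← hb]; exact Function.update_eq_self j0 v
      rcases hids with ⟨h1, h2, hb⟩ | ⟨h1, h2, hb⟩
      · -- v j0 = true
        have hinf : influ f j0 i := ⟨v, by rw [h1, h2]; exact fun h => hfv h.symm⟩
        refine ⟨j0, hj0, hinf, ?_⟩
        cases hσ : σ j0 i with
        | true =>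
          have hmono := (hsign j0 i hinf).1 hσ v
          rw [h1, h2] at hmono
          have := bool_aux _ _ hmono (fun h => hfv h)
          simp [hσ, hb, this.2]
        | false =>
          have hmono := (hsign j0 i hinf).2 hσ v
          rw [h1, h2] at hmono
          have := bool_aux _ _ hmono (fun h => hfv h.symm)
          simp [hσ, hb, this.1]
      · -- v j0 = false
        have hinf : influ f j0 i := ⟨v, by rw [h1, h2]; exact fun h => hfv h⟩
        refine ⟨j0, hj0, hinf, ?_⟩
        cases hσ : σ j0 i with
        | true =>
          have hmono := (hsign j0 i hinf).1 hσ v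
          rw [h1, h2] at hmono
          have := bool_aux _ _ hmono (fun h => hfv h.symm)
          simp [hσ, hb, this.1]
        | false =>
          have hmono := (hsign j0 i hinf).2 hσ v
          rw [h1, h2] at hmono
          have := bool_aux _ _ hmono (fun h => hfv h)
          simp [hσ, hb, this.2]

lemma parity_lemma (m : ℕ) (h : Fin (m+1) → Bool) :
    Even ((Finset.univ.filter (fun k : Fin (m+1) => h k ≠ h (k+1))).card) := by
  have key : (((Finset.univ.filter (fun k : Fin (m+1) => h k ≠ h (k+1))).card : ZMod 2)) = 0 := by
    rw [Finset.card_filter]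
    push_cast
    have hpt : ∀ k : Fin (m+1), ((if h k ≠ h (k+1) then (1:ZMod 2) else 0)) =
        (if h k then (1:ZMod 2) else 0) + (if h (k+1) then (1:ZMod 2) else 0) := by
      intro k
      cases hk : h k <;> cases hk' : h (k+1) <;> simp [hk, hk'] <;> decide
    rw [Finset.sum_congr rfl (fun k _ => hpt k), Finset.sum_add_distrib]
    have hshift : ∑ k : Fin (m+1), (if h (k+1) then (1:ZMod 2) else 0)
        = ∑ k : Fin (m+1), (if h k then (1:ZMod 2) else 0) :=
      Fintype.sum_equiv (Equiv.addRight 1) _ _ (fun k => rfl)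
    rw [hshift]
    exact CharTwo.add_self_eq_zero _
  have hdvd : 2 ∣ (Finset.univ.filter (fun k : Fin (m+1) => h k ≠ h (k+1))).card :=
    (ZMod.natCast_eq_zero_iff _ 2).mp key
  exact even_iff_two_dvd.mpr hdvd

/-- If the signed interaction graph of `f` has no positive cycle (a directed
cycle with an even number of negative arcs), then `f` has at most one fixed
point. -/
theorem stmt_6 {n : ℕ} (f : (Fin n → Bool) → Fin n → Bool)
    (σ : Fin n → Fin n → Bool)
    (hsign : ∀ j i : Fin n, influ f j i →
      (σ j i = true → monoInc f j i) ∧ (σ j i = false → monoDec f j i))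
    (hnopos : ¬ ∃ (m : ℕ) (c : Fin (m + 1) → Fin n),
      (∀ k : Fin (m + 1), influ f (c k) (c (k + 1))) ∧
      Even ((Finset.univ.filter
        (fun k : Fin (m + 1) => σ (c k) (c (k + 1)) = false)).card)) :
    ∀ x y : Fin n → Bool, f x = x → f y = y → x = y := by
  intro x y hx hy
  by_contra hne
  obtain ⟨i0, hi0⟩ := Function.ne_iff.mp hne
  have step : ∀ i : Fin n, x i ≠ y i →
      ∃ j, (x j ≠ y j) ∧ influ f j i ∧ (σ j i = false ↔ y j ≠ y i) := by
    intro i hi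
    have hfu : f x i ≠ f y i := by rw [congrFun hx i, congrFun hy i]; exact hi
    obtain ⟨j, h1, h2, h3⟩ := key_step f σ hsign i
      ((Finset.univ.filter (fun j => x j ≠ y j)).card) x y le_rfl hfu
    refine ⟨j, h1, h2, ?_⟩
    rwa [congrFun hy i] at h3
  classical
  obtain ⟨g, hg⟩ : ∃ g : Fin n → Fin n, ∀ i, x i ≠ y i →
      (x (g i) ≠ y (g i)) ∧ influ f (g i) i ∧ (σ (g i) i = false ↔ y (g i) ≠ y i) :=
    ⟨fun i => if h : x i ≠ y i then (step i h).choose else i,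
     fun i h => by simp only [dif_pos h]; exact (step i h).choose_spec⟩
  have hs : ∀ t : ℕ, x (g^[t] i0) ≠ y (g^[t] i0) := by
    intro t
    induction t with
    | zero => simpa using hi0
    | succ t ih => rw [Function.iterate_succ_apply']; exact (hg _ ih).1
  obtain ⟨a, b, hab, heq⟩ : ∃ a b : ℕ, a < b ∧ g^[a] i0 = g^[b] i0 := by
    obtain ⟨a, b, hab, heq⟩ := Finite.exists_ne_map_eq_of_infinite (fun t : ℕ => g^[t] i0)
    rcases hab.lt_or_gt with h | h
    exacts [⟨a, b, h, heq⟩, ⟨b, a, h, heq.symm⟩]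
  set m : ℕ := b - a - 1 with hmdef
  have hm : m + 1 = b - a := by omega
  set c : Fin (m+1) → Fin n := fun k => g^[b - (k:ℕ)] i0 with hc
  have hklt : ∀ k : Fin (m+1), (k:ℕ) < b - a := by
    intro k; have := k.isLt; omega
  have hnext : ∀ k : Fin (m+1), c (k+1) = g^[b - (k:ℕ) - 1] i0 := by
    intro k
    by_cases hk : k = Fin.last m
    · have hv : ((k+1 : Fin (m+1)) : ℕ) = 0 := by
        rw [Fin.val_add_one, if_pos hk]
      have hkv : (k:ℕ) = m := by rw [hk]; rfl
      have ha : b - (k:ℕ) - 1 = a := by omega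
      rw [hc]; simp only [hv, ha, Nat.sub_zero]
      exact heq.symm
    · have hv : ((k+1 : Fin (m+1)) : ℕ) = (k:ℕ) + 1 := by
        rw [Fin.val_add_one, if_neg hk]
      rw [hc]; simp only [hv]
      congr 1
  have hck : ∀ k : Fin (m+1), c k = g (g^[b - (k:ℕ) - 1] i0) := by
    intro k
    have h1 : b - (k:ℕ) = (b - (k:ℕ) - 1) + 1 := by have := hklt k; omega
    have h2 := Function.iterate_succ_apply' g (b - (k:ℕ) - 1) i0
    rw [hc]; simp only []
    conv_lhs => rw [h1]
    exact h2
  have arcs : ∀ k : Fin (m+1), influ f (c k) (c (k+1)) := by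
    intro k
    rw [hck k, hnext k]
    exact (hg _ (hs _)).2.1
  have signs : ∀ k : Fin (m+1), (σ (c k) (c (k+1)) = false ↔ y (c k) ≠ y (c (k+1))) := by
    intro k
    rw [hck k, hnext k]
    exact (hg _ (hs _)).2.2
  apply hnopos
  refine ⟨m, c, arcs, ?_⟩
  have hfilter : Finset.univ.filter (fun k : Fin (m+1) => σ (c k) (c (k+1)) = false)
      = Finset.univ.filter (fun k : Fin (m+1) => y (c k) ≠ y (c (k+1))) :=
    Finset.filter_congr (fun k _ => by rw [signs k])
  rw [hfilter]
  exact parity_lemma m (fun k => y (c k))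
end

section
/- Let f : B^n → B^n be a Boolean network and δ_1, δ_2 two block-sequential update schedules viewed as functions δ : {1,…,n} → ℕ giving each node its block index. If for every pair (i,j) such that j influences i (f_i depends on x_j) we have δ_1(j) < δ_1(i) ⟺ δ_2(j) < δ_2(i), then F[δ_1] = F[δ_2]. -/
def upd {n : ℕ} (f : (Fin n → Bool) → Fin n → Bool)
    (B : Finset (Fin n)) (x : Fin n → Bool) : Fin n → Bool :=
  fun i => if i ∈ B then f x i else x i

def run {n : ℕ} (f : (Fin n → Bool) → Fin n → Bool)
    (δ : List (Finset (Fin n))) (x : Fin n → Bool) : Fin n → Bool :=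
  δ.foldl (fun y B => upd f B y) x

/-- Global transition function of the block-sequential schedule given by
the block-index function `δ : Fin n → ℕ`: blocks `δ⁻¹(k)` are updated in
increasing order of `k`. -/
def bsRun {n : ℕ} (f : (Fin n → Bool) → Fin n → Bool) (δ : Fin n → ℕ) :
    (Fin n → Bool) → Fin n → Bool :=
  run f ((List.range (Finset.univ.sup δ + 1)).map
    (fun k => Finset.univ.filter (fun i => δ i = k)))

lemma noninflu_update {n : ℕ} (f : (Fin n → Bool) → Fin n → Bool)
    (i j : Fin n) (hj : ¬ influ f j i) (x : Fin n → Bool) (b : Bool) :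
    f (Function.update x j b) i = f x i := by
  unfold influ at hj
  push_neg at hj
  have key : ∀ b' : Bool, f (Function.update x j b') i = f (Function.update x j true) i := by
    intro b'; cases b' <;> simp [hj x]
  calc f (Function.update x j b) i = f (Function.update x j true) i := key b
    _ = f (Function.update x j (x j)) i := (key (x j)).symm
    _ = f x i := by rw [Function.update_eq_self]

lemma f_congr {n : ℕ} (f : (Fin n → Bool) → Fin n → Bool) (i : Fin n)
    (x y : Fin n → Bool) (h : ∀ j, influ f j i → x j = y j) : f x i = f y i := by
  classical
  have key : ∀ m (x y : Fin n → Bool),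
      (Finset.univ.filter (fun j => x j ≠ y j)).card = m →
      (∀ j, influ f j i → x j = y j) → f x i = f y i := by
    intro m
    induction m with
    | zero =>
      intro x y hc hxy
      have hxy' : x = y := by
        funext j
        by_contra hne
        have hmem : j ∈ Finset.univ.filter (fun j => x j ≠ y j) := by simp [hne]
        rw [Finset.card_eq_zero] at hc
        simp [hc] at hmem
      rw [hxy']
    | succ m ih =>
      intro x y hc hxy
      have hpos : 0 < (Finset.univ.filter (fun j => x j ≠ y j)).card := by omega
      obtain ⟨j, hj⟩ := Finset.card_pos.mp hpos
      simp only [Finset.mem_filter, Finset.mem_univ, true_and] at hj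
      have hni : ¬ influ f j i := fun hin => hj (hxy j hin)
      set x' := Function.update x j (y j) with hx'
      have h1 : f x i = f x' i := (noninflu_update f i j hni x (y j)).symm
      have hset : (Finset.univ.filter (fun k => x' k ≠ y k))
          = (Finset.univ.filter (fun k => x k ≠ y k)).erase j := by
        ext k
        by_cases hk : k = j <;>
          simp [hk, hx', Function.update_apply, Finset.mem_erase]
      have hc' : (Finset.univ.filter (fun k => x' k ≠ y k)).card = m := by
        rw [hset, Finset.card_erase_of_mem (by simp [hj]), hc]
        rfl
      have h2 : f x' i = f y i := by
        apply ih x' y hc'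
        intro k hk
        by_cases hkj : k = j
        · subst hkj; simp [hx']
        · simp [hx', Function.update_apply, hkj, hxy k hk]
      rw [h1, h2]
  exact key _ x y rfl h

def blocks {n : ℕ} (δ : Fin n → ℕ) (k : ℕ) : List (Finset (Fin n)) :=
  (List.range k).map (fun t => Finset.univ.filter (fun i => δ i = t))

lemma run_blocks {n : ℕ} (f : (Fin n → Bool) → Fin n → Bool) (δ : Fin n → ℕ) :
    ∀ (k : ℕ) (x : Fin n → Bool) (j : Fin n),
      run f (blocks δ k) x j =
        if δ j < k then f (run f (blocks δ (δ j)) x) j else x j := by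
  intro k
  induction k with
  | zero => intro x j; simp [blocks, run]
  | succ k ih =>
    intro x j
    have hsplit : blocks δ (k + 1) = blocks δ k ++ [Finset.univ.filter (fun i => δ i = k)] := by
      simp [blocks, List.range_succ]
    have hr : run f (blocks δ (k+1)) x =
        upd f (Finset.univ.filter (fun i => δ i = k)) (run f (blocks δ k) x) := by
      simp [run, hsplit]
    rw [hr]
    by_cases hjk : δ j = k
    · simp [upd, hjk, Nat.lt_succ_self]
    · have hrec : run f (blocks δ k) x j
          = if δ j < k then f (run f (blocks δ (δ j)) x) j else x j := ih x j
      simp only [upd, Finset.mem_filter, Finset.mem_univ, true_and, hjk, if_false]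
      rw [hrec]
      by_cases hlt : δ j < k
      · simp [hlt, Nat.lt_succ_of_lt hlt]
      · have hn : ¬ δ j < k + 1 := by omega
        simp [hlt, hn]

lemma bsRun_eq_run {n : ℕ} (f : (Fin n → Bool) → Fin n → Bool) (δ : Fin n → ℕ)
    (x : Fin n → Bool) (j : Fin n) :
    bsRun f δ x j = f (run f (blocks δ (δ j)) x) j := by
  have hle : δ j < Finset.univ.sup δ + 1 :=
    Nat.lt_succ_of_le (Finset.le_sup (Finset.mem_univ j))
  show run f (blocks δ (Finset.univ.sup δ + 1)) x j = _
  rw [run_blocks f δ _ x j, if_pos hle]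

lemma bsRun_rec {n : ℕ} (f : (Fin n → Bool) → Fin n → Bool) (δ : Fin n → ℕ)
    (x : Fin n → Bool) (i : Fin n) :
    bsRun f δ x i = f (fun j => if δ j < δ i then bsRun f δ x j else x j) i := by
  rw [bsRun_eq_run]
  congr 1
  funext j
  rw [run_blocks f δ _ x j]
  by_cases hlt : δ j < δ i
  · simp [hlt, bsRun_eq_run]
  · simp [hlt]

/-- Aracena et al.: two block-sequential schedules with the same update graph
labels on the arcs of the interaction graph yield the same global transition
function. -/
theorem stmt_7 {n : ℕ} (f : (Fin n → Bool) → Fin n → Bool)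
    (δ₁ δ₂ : Fin n → ℕ)
    (h : ∀ i j : Fin n, influ f j i → (δ₁ j < δ₁ i ↔ δ₂ j < δ₂ i)) :
    bsRun f δ₁ = bsRun f δ₂ := by
  funext x i
  have main : ∀ m, ∀ i : Fin n, δ₁ i = m → bsRun f δ₁ x i = bsRun f δ₂ x i := by
    intro m
    induction m using Nat.strong_induction_on with
    | _ m ih =>
      intro i hi
      rw [bsRun_rec f δ₁ x i, bsRun_rec f δ₂ x i]
      apply f_congr
      intro j hj
      by_cases h1 : δ₁ j < δ₁ i
      · have h2 : δ₂ j < δ₂ i := (h i j hj).mp h1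
        simp only [h1, h2, if_pos]
        exact ih (δ₁ j) (hi ▸ h1) j rfl
      · have h2 : ¬ δ₂ j < δ₂ i := fun hl => h1 ((h i j hj).mpr hl)
        simp [h1, h2]
  exact main (δ₁ i) i rfl
end

section
/- The periodic update schedule ({0,1},{1,2},{0,1,2},{0,1,2},{0,1},{1,2}) on node set {0,1,2} is fair but is neither the rewriting of any block-parallel schedule nor a block-sequential schedule (since node 1 appears in more than one block and the blocks do not form a partition). -/
def bpW {n m : ℕ} (S : Fin m → List (Fin n)) (t : ℕ) : Finset (Fin n) :=
  Finset.univ.filter (fun v => ∃ i : Fin m, (S i)[t % (S i).length]? = some v)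

def bpL {n m : ℕ} (S : Fin m → List (Fin n)) : ℕ :=
  Finset.univ.lcm (fun i => (S i).length)

/-- The periodic schedule ({0,1},{1,2},{0,1,2},{0,1,2},{0,1},{1,2}) on three
nodes is fair, but it is neither block-sequential (its blocks do not form a
partition: node 1 appears several times) nor the rewriting of any
block-parallel schedule. -/
theorem stmt_12 :
    let Ws : Fin 6 → Finset (Fin 3) :=
      ![{0, 1}, {1, 2}, {0, 1, 2}, {0, 1, 2}, {0, 1}, {1, 2}]
    (∀ v : Fin 3, ∃ t : Fin 6, v ∈ Ws t) ∧
    ¬ (∀ v : Fin 3, (Finset.univ.filter (fun t : Fin 6 => v ∈ Ws t)).card = 1) ∧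
    ¬ ∃ (m : ℕ) (S : Fin m → List (Fin 3)),
        (∀ i, S i ≠ []) ∧ (∀ i, (S i).Nodup) ∧
        (∀ i j, i ≠ j → ∀ v, v ∈ S i → v ∉ S j) ∧
        (∀ v : Fin 3, ∃ i, v ∈ S i) ∧
        bpL S = 6 ∧ (∀ t : Fin 6, bpW S t = Ws t) := by
  refine ⟨by decide, by decide, ?_⟩
  rintro ⟨m, S, hne, hnd, hdisj, hcov, hlcm, -⟩
  have hdvd6 : ∀ i, (S i).length ∣ 6 := fun i =>
    hlcm ▸ Finset.dvd_lcm (Finset.mem_univ i)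
  have h3 : ∃ i, 3 ∣ (S i).length := by
    by_contra h
    push_neg at h
    have h2 : bpL S ∣ 2 := Finset.lcm_dvd (fun i _ => by
      have hc : Nat.Coprime (S i).length 3 :=
        ((Nat.prime_three.coprime_iff_not_dvd).mpr (h i)).symm
      exact hc.dvd_of_dvd_mul_right (by simpa using hdvd6 i))
    rw [hlcm] at h2
    omega
  obtain ⟨i, hi3⟩ := h3
  have hlen3 : (S i).length = 3 := by
    have hle : (S i).length ≤ 3 := by
      simpa using (hnd i).length_le_card
    have hpos : 0 < (S i).length := List.length_pos_iff.mpr (hne i)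
    omega
  have hall : ∀ v : Fin 3, v ∈ S i := by
    have hcard : (S i).toFinset.card = 3 := by
      rw [List.toFinset_card_of_nodup (hnd i), hlen3]
    have huniv : (S i).toFinset = Finset.univ :=
      Finset.eq_univ_of_card _ (by simpa using hcard)
    intro v
    have : v ∈ (S i).toFinset := huniv ▸ Finset.mem_univ v
    simpa using this
  have hji : ∀ j : Fin m, j = i := by
    intro j
    by_contra hj
    obtain ⟨v, hv⟩ := List.exists_mem_of_ne_nil (S j) (hne j)
    exact hdisj j i hj v hv (hall v)
  have : bpL S ∣ 3 := Finset.lcm_dvd (fun j _ => by rw [hji j, hlen3])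
  rw [hlcm] at this
  omega
end
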